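/- arXiv:math/0410451 — 4 statements merged into one kernel-verified Lean document; each statement's English description precedes it below -/
import Mathlib

section
/- Let a > 0 and ε > 0. For every x ∈ ℝ³, the integral over y ∈ ℝ³ (with respect to Lebesgue measure) of exp(−(a/ε)‖x−y‖)/(4π ε² ‖x−y‖) equals 1/a². -/
open MeasureTheory Real Set

lemma gamma_five_half : Real.Gamma (3 / 2 + 1) = 3 / 4 * Real.sqrt π := by
  rw [Real.Gamma_add_one (by norm_num)]
  have h32 : (3 / 2 : ℝ) = 1 / 2 + 1 := by norm_num
  rw [h32, Real.Gamma_add_one (by norm_num), Real.Gamma_one_half_eq]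
  ring

lemma ball_vol : (volume (Metric.ball (0 : EuclideanSpace ℝ (Fin 3)) 1)).toReal
    = 4 / 3 * π := by
  rw [EuclideanSpace.volume_ball]
  have hπ : 0 < Real.sqrt π := Real.sqrt_pos.mpr Real.pi_pos
  simp only [Fintype.card_fin, ENNReal.ofReal_one, one_pow, one_mul]
  rw [ENNReal.toReal_ofReal (by positivity)]
  push_cast
  rw [gamma_five_half]
  rw [div_eq_iff (by positivity)]
  have : Real.sqrt π ^ 3 = π * Real.sqrt π := by
    rw [pow_succ, sq_sqrt Real.pi_pos.le]
  rw [this]; ring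

/-- For `a > 0`, `ε > 0` and any `x ∈ ℝ³`, the integral of the Green's function
`exp(-(a/ε)‖x-y‖)/(4πε²‖x-y‖)` over `y ∈ ℝ³` (Lebesgue measure) equals `1/a²`. -/
theorem green_function_integral (a ε : ℝ) (ha : 0 < a) (hε : 0 < ε)
    (x : EuclideanSpace ℝ (Fin 3)) :
    ∫ y : EuclideanSpace ℝ (Fin 3),
        Real.exp (-(a / ε) * ‖x - y‖) / (4 * Real.pi * ε ^ 2 * ‖x - y‖) = 1 / a ^ 2 := by
  set c : ℝ := a / ε with hc
  have hcpos : 0 < c := div_pos ha hε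
  set f : ℝ → ℝ := fun r => Real.exp (-c * r) / (4 * π * ε ^ 2 * r) with hf
  have htrans : ∫ y : EuclideanSpace ℝ (Fin 3), f ‖x - y‖ = ∫ y : EuclideanSpace ℝ (Fin 3), f ‖y‖ := by
    rw [← integral_sub_left_eq_self (fun y : EuclideanSpace ℝ (Fin 3) => f ‖y‖) volume x]
  have hdim : Module.finrank ℝ (EuclideanSpace ℝ (Fin 3)) = 3 := by
    simp [finrank_euclideanSpace]
  calc ∫ y : EuclideanSpace ℝ (Fin 3),
        Real.exp (-(a / ε) * ‖x - y‖) / (4 * Real.pi * ε ^ 2 * ‖x - y‖)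
      = ∫ y : EuclideanSpace ℝ (Fin 3), f ‖y‖ := htrans
    _ = Module.finrank ℝ (EuclideanSpace ℝ (Fin 3)) •
          (volume (Metric.ball (0 : EuclideanSpace ℝ (Fin 3)) 1)).toReal •
          ∫ r in Ioi (0 : ℝ), r ^ (Module.finrank ℝ (EuclideanSpace ℝ (Fin 3)) - 1) • f r :=
        MeasureTheory.integral_fun_norm_addHaar volume f
    _ = 3 * ((4 / 3 * π) * ∫ r in Ioi (0 : ℝ), r ^ 2 * f r) := by
        rw [hdim, ball_vol]
        simp [smul_eq_mul, mul_assoc]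
    _ = 1 / a ^ 2 := by
        have key : ∫ r in Ioi (0 : ℝ), r ^ 2 * f r
            = 1 / (4 * π * ε ^ 2) * (1 / c ^ 2) := by
          have h1 : ∫ r in Ioi (0 : ℝ), r ^ 2 * f r
              = ∫ r in Ioi (0 : ℝ), 1 / (4 * π * ε ^ 2) * (r ^ ((2:ℝ) - 1) * Real.exp (-(c * r))) := by
            refine setIntegral_congr_fun measurableSet_Ioi fun r hr => ?_
            have hr0 : 0 < r := hr
            rw [hf]
            rw [show ((2:ℝ) - 1) = (1:ℝ) by norm_num, Real.rpow_one]
            field_simp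
          rw [h1, integral_const_mul, integral_rpow_mul_exp_neg_mul_Ioi (by norm_num) hcpos]
          rw [Real.rpow_two, div_pow, one_pow, Real.Gamma_two]; ring
        rw [key, hc]
        have hπ := Real.pi_pos
        field_simp
end

section
/- Let a > 0, ε > 0, let p : ℝ³ → ℝ be bounded, continuous and nonnegative, and let f : ℝ → ℝ be continuously differentiable. Fix R > 0 and set M₁(R) = sup of |f'(t)| over |t| ≤ 2R. Assume (‖p‖∞ + M₁(R))/a² ≤ γ for some γ with 0 < γ < 1. Then for all bounded continuous v, w : ℝ³ → ℝ with ‖v‖∞ ≤ R and ‖w‖∞ ≤ R, one has ‖T(v) − T(w)‖∞ ≤ γ ‖v − w‖∞, where T(v)(x) = ∫_{ℝ³} g_{a,ε}(x,y)(−p(y)v(y) + f(v(y))) dy. -/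
open MeasureTheory Real Set


lemma vol_ball3 : (volume (Metric.ball (0 : EuclideanSpace ℝ (Fin 3)) 1)).toReal
    = 4 * π / 3 := by
  rw [EuclideanSpace.volume_ball]
  have h1 : Real.Gamma ((Fintype.card (Fin 3) : ℝ) / 2 + 1) = 3 * Real.sqrt π / 4 := by
    have : ((Fintype.card (Fin 3) : ℝ) / 2 + 1) = 3/2 + 1 := by norm_num
    rw [this, Real.Gamma_add_one (by norm_num)]
    have : (3/2 : ℝ) = 1/2 + 1 := by norm_num
    rw [this, Real.Gamma_add_one (by norm_num), Real.Gamma_one_half_eq]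
    ring
  rw [h1]
  have hsq : Real.sqrt π ^ Fintype.card (Fin 3) = π * Real.sqrt π := by
    have : Fintype.card (Fin 3) = 3 := by simp
    rw [this]
    have := Real.sq_sqrt Real.pi_pos.le
    nlinarith [Real.sqrt_nonneg π]
  rw [hsq]
  have hs : Real.sqrt π > 0 := Real.sqrt_pos.mpr Real.pi_pos
  rw [ENNReal.ofReal_one, one_pow, one_mul, ENNReal.toReal_ofReal (by positivity)]
  field_simp


lemma radial_int (c C : ℝ) (hc : 0 < c) :
    ∫ y in Ioi (0:ℝ), y ^ (3 - 1) • (Real.exp (-c * y) / (C * y))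
      = (1 / C) * (1 / c ^ 2) := by
  have h1 : ∀ y ∈ Ioi (0:ℝ), y ^ (3 - 1) • (Real.exp (-c * y) / (C * y))
      = (1 / C) * (y ^ ((2:ℝ) - 1) * Real.exp (-(c * y))) := by
    intro y hy
    have hy0 : (0:ℝ) < y := hy
    have : y ^ ((2:ℝ) - 1) = y := by
      norm_num
    rw [this]
    simp only [smul_eq_mul]
    rw [neg_mul]
    rcases eq_or_ne C 0 with h | h
    · simp [h]
    · field_simp
  rw [setIntegral_congr_fun measurableSet_Ioi h1, integral_const_mul,
    integral_rpow_mul_exp_neg_mul_Ioi (by norm_num) hc, Real.Gamma_two]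
  rw [Real.rpow_two, div_pow]
  ring

lemma integral_G (a ε : ℝ) (ha : 0 < a) (hε : 0 < ε) :
    ∫ y : EuclideanSpace ℝ (Fin 3), Real.exp (-(a/ε) * ‖y‖) / (4 * π * ε^2 * ‖y‖) = 1 / a^2 := by
  have key := integral_fun_norm_addHaar (volume : Measure (EuclideanSpace ℝ (Fin 3)))
      (fun r => Real.exp (-(a/ε) * r) / (4 * π * ε^2 * r))
  have hdim : Module.finrank ℝ (EuclideanSpace ℝ (Fin 3)) = 3 := by simp
  rw [hdim] at key
  rw [key, measureReal_def, vol_ball3, radial_int (a/ε) (4 * π * ε^2) (by positivity)]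
  have hπ : (0:ℝ) < π := Real.pi_pos
  simp only [nsmul_eq_mul, smul_eq_mul, Nat.cast_ofNat]
  field_simp

lemma integrable_G (a ε : ℝ) (ha : 0 < a) (hε : 0 < ε) :
    Integrable (fun y : EuclideanSpace ℝ (Fin 3) =>
      Real.exp (-(a/ε) * ‖y‖) / (4 * π * ε^2 * ‖y‖)) := by
  by_contra h
  have h0 := integral_undef h
  rw [integral_G a ε ha hε] at h0
  have : (0:ℝ) < 1/a^2 := by positivity
  linarith


/-- If `(‖p‖∞ + M₁(R))/a² ≤ γ < 1` then
`T(v)(x) = ∫ g_{a,ε}(x,y)(-p(y)v(y) + f(v(y))) dy` is a `γ`-contraction on the ball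
of radius `R` of bounded continuous functions (sup-norm). -/
theorem T_is_contraction (a ε R γ : ℝ) (ha : 0 < a) (hε : 0 < ε) (hR : 0 < R)
    (hγ0 : 0 < γ) (hγ1 : γ < 1)
    (p : BoundedContinuousFunction (EuclideanSpace ℝ (Fin 3)) ℝ) (hp : ∀ x, 0 ≤ p x)
    (f : ℝ → ℝ) (hf : ContDiff ℝ 1 f)
    (M₁ : ℝ) (hM₁ : M₁ = sSup ((fun t => |deriv f t|) '' Set.Icc (-(2 * R)) (2 * R)))
    (hcond : (‖p‖ + M₁) / a ^ 2 ≤ γ)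
    (v w : BoundedContinuousFunction (EuclideanSpace ℝ (Fin 3)) ℝ)
    (hv : ‖v‖ ≤ R) (hw : ‖w‖ ≤ R) :
    ∀ x : EuclideanSpace ℝ (Fin 3),
      |(∫ y : EuclideanSpace ℝ (Fin 3),
            Real.exp (-(a / ε) * ‖x - y‖) / (4 * Real.pi * ε ^ 2 * ‖x - y‖) *
              (-(p y) * v y + f (v y))) -
          ∫ y : EuclideanSpace ℝ (Fin 3),
            Real.exp (-(a / ε) * ‖x - y‖) / (4 * Real.pi * ε ^ 2 * ‖x - y‖) *
              (-(p y) * w y + f (w y))| ≤ γ * ‖v - w‖ := by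
  intro x
  set G : EuclideanSpace ℝ (Fin 3) → ℝ :=
    fun z => Real.exp (-(a/ε) * ‖z‖) / (4 * π * ε^2 * ‖z‖) with hG
  have hGnn : ∀ z, 0 ≤ G z := by
    intro z
    have : (0:ℝ) ≤ 4 * π * ε^2 * ‖z‖ := by positivity
    exact div_nonneg (Real.exp_nonneg _) this
  have hGint : Integrable G := integrable_G a ε ha hε
  have hGx : Integrable (fun y => G (x - y)) := hGint.comp_sub_left x
  have hGxval : ∫ y : EuclideanSpace ℝ (Fin 3), G (x - y) = 1 / a^2 := by
    rw [integral_sub_left_eq_self G volume x]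
    exact integral_G a ε ha hε
  -- bounds on f' on the interval
  have hderiv_cont : Continuous fun t => |deriv f t| := (hf.continuous_deriv le_rfl).abs
  have hMb : ∀ t ∈ Icc (-(2*R)) (2*R), |deriv f t| ≤ M₁ := by
    intro t ht
    rw [hM₁]
    exact le_csSup ((isCompact_Icc.image hderiv_cont).bddAbove) (Set.mem_image_of_mem _ ht)
  have hM₁0 : 0 ≤ M₁ := le_trans (abs_nonneg _)
    (hMb 0 (by constructor <;> nlinarith))
  -- membership of values
  have hmem : ∀ (u : BoundedContinuousFunction (EuclideanSpace ℝ (Fin 3)) ℝ), ‖u‖ ≤ R →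
      ∀ y, u y ∈ Icc (-(2*R)) (2*R) := by
    intro u hu y
    have := (abs_le.mp (le_trans (u.norm_coe_le_norm y) hu))
    constructor <;> [linarith [this.1]; linarith [this.2]]
  -- Lipschitz bound via MVT
  have hlip : ∀ y, |f (v y) - f (w y)| ≤ M₁ * |v y - w y| := by
    intro y
    have := Convex.norm_image_sub_le_of_norm_deriv_le
      (f := f) (s := Icc (-(2*R)) (2*R))
      (fun t _ => (hf.differentiable one_ne_zero).differentiableAt)
      (fun t ht => by simpa using hMb t ht) (convex_Icc _ _)
      (hmem w hw y) (hmem v hv y)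
    simpa [Real.norm_eq_abs] using this
  set Fv : EuclideanSpace ℝ (Fin 3) → ℝ := fun y => -(p y) * v y + f (v y) with hFv
  set Fw : EuclideanSpace ℝ (Fin 3) → ℝ := fun y => -(p y) * w y + f (w y) with hFw
  -- integrability of the two integrands
  obtain ⟨C₀, hC₀⟩ : ∃ C₀, ∀ t ∈ Icc (-(2*R)) (2*R), ‖f t‖ ≤ C₀ :=
    isCompact_Icc.exists_bound_of_continuousOn (hf.continuous.continuousOn)
  have hbddF : ∀ (u : BoundedContinuousFunction (EuclideanSpace ℝ (Fin 3)) ℝ), ‖u‖ ≤ R →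
      ∀ y, ‖-(p y) * u y + f (u y)‖ ≤ ‖p‖ * R + C₀ := by
    intro u hu y
    have h1 : |p y| ≤ ‖p‖ := by simpa [Real.norm_eq_abs] using p.norm_coe_le_norm y
    have h2 : |u y| ≤ R := le_trans (by simpa [Real.norm_eq_abs] using u.norm_coe_le_norm y) hu
    have h3 : ‖f (u y)‖ ≤ C₀ := hC₀ _ (hmem u hu y)
    have : ‖-(p y) * u y + f (u y)‖ ≤ ‖-(p y) * u y‖ + ‖f (u y)‖ := norm_add_le _ _
    refine this.trans ?_
    have : ‖-(p y) * u y‖ ≤ ‖p‖ * R := by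
      rw [Real.norm_eq_abs, abs_mul, abs_neg]
      exact mul_le_mul h1 h2 (abs_nonneg _) (norm_nonneg _)
    linarith
  have hintv : Integrable (fun y => G (x - y) * Fv y) := by
    have := hGx.bdd_mul
      (((p.continuous.neg.mul v.continuous).add
        (hf.continuous.comp v.continuous)).aestronglyMeasurable)
      (Filter.Eventually.of_forall (hbddF v hv))
    simpa [hFv, neg_mul, mul_comm] using this
  have hintw : Integrable (fun y => G (x - y) * Fw y) := by
    have := hGx.bdd_mul
      (((p.continuous.neg.mul w.continuous).add
        (hf.continuous.comp w.continuous)).aestronglyMeasurable)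
      (Filter.Eventually.of_forall (hbddF w hw))
    simpa [hFw, neg_mul, mul_comm] using this
  have hsub : (∫ y, G (x - y) * Fv y) - (∫ y, G (x - y) * Fw y)
      = ∫ y, G (x - y) * (Fv y - Fw y) := by
    rw [← integral_sub hintv hintw]
    simp [mul_sub]
  set K : ℝ := ‖p‖ + M₁ with hK
  have hK0 : 0 ≤ K := add_nonneg (norm_nonneg _) hM₁0
  have hptwise : ∀ y, ‖G (x - y) * (Fv y - Fw y)‖ ≤ G (x - y) * (K * ‖v - w‖) := by
    intro y
    rw [Real.norm_eq_abs, abs_mul, abs_of_nonneg (hGnn _)]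
    refine mul_le_mul_of_nonneg_left ?_ (hGnn _)
    have hvw : |v y - w y| ≤ ‖v - w‖ := by
      simpa [Real.norm_eq_abs] using (v - w).norm_coe_le_norm y
    have h1 : |p y| ≤ ‖p‖ := by simpa [Real.norm_eq_abs] using p.norm_coe_le_norm y
    have hd : Fv y - Fw y = -(p y) * (v y - w y) + (f (v y) - f (w y)) := by
      simp [hFv, hFw]; ring
    rw [hd]
    calc |(-(p y)) * (v y - w y) + (f (v y) - f (w y))|
        ≤ |(-(p y)) * (v y - w y)| + |f (v y) - f (w y)| := abs_add_le _ _
      _ ≤ ‖p‖ * |v y - w y| + M₁ * |v y - w y| := by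
          refine add_le_add ?_ (hlip y)
          rw [abs_mul, abs_neg]
          exact mul_le_mul_of_nonneg_right h1 (abs_nonneg _)
      _ = K * |v y - w y| := by ring
      _ ≤ K * ‖v - w‖ := mul_le_mul_of_nonneg_left hvw hK0
  have hbig : |(∫ y, G (x - y) * Fv y) - ∫ y, G (x - y) * Fw y| ≤ γ * ‖v - w‖ := by
    rw [hsub, ← Real.norm_eq_abs]
    calc ‖∫ y, G (x - y) * (Fv y - Fw y)‖
        ≤ ∫ y, G (x - y) * (K * ‖v - w‖) :=
          norm_integral_le_of_norm_le (hGx.mul_const _)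
            (Filter.Eventually.of_forall hptwise)
      _ = (1 / a^2) * (K * ‖v - w‖) := by rw [integral_mul_const, hGxval]
      _ = (K / a^2) * ‖v - w‖ := by ring
      _ ≤ γ * ‖v - w‖ := mul_le_mul_of_nonneg_right hcond (norm_nonneg _)
  exact hbig
end

section
/- (Theorem 1.2, integral-equation form.) Let a > 0, let q : ℝ³ → ℝ be bounded and uniformly continuous with q(x) ≥ a² for all x, put p = q − a². Let f : ℝ → ℝ be continuously differentiable. Fix R > 0, set M(R) = sup_{|t|≤R} |f(t)| and M₁(R) = sup_{|t|≤2R} |f'(t)|, and assume (‖p‖∞ · R + M(R))/a² ≤ R and (‖p‖∞ + M₁(R))/a² ≤ γ for some γ with 0 < γ < 1. For each ε > 0 let u_ε be the unique bounded continuous function with ‖u_ε‖∞ ≤ R satisfying u_ε(x) = ∫_{ℝ³} g_{a,ε}(x,y)(−p(y)u_ε(y) + f(u_ε(y))) dy for all x, and let u be the unique bounded continuous function with ‖u‖∞ ≤ R satisfying q(x)u(x) = f(u(x)) for all x. Then ‖u_ε − u‖∞ → 0 as ε → 0⁺. -/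
open MeasureTheory Measure Real Set Metric Filter

lemma radial_integrable (f : ℝ → ℝ) (_hm : Measurable f)
    (hi : IntegrableOn (fun r => f r * r ^ 2) (Ioi (0:ℝ))) :
    Integrable (fun x : EuclideanSpace ℝ (Fin 3) => f ‖x‖) := by
  have hs : MeasurableSet ({(0:EuclideanSpace ℝ (Fin 3))}ᶜ) := (measurableSet_singleton _).compl
  have h2 : Integrable (fun r : Ioi (0:ℝ) => f r.1) (Measure.volumeIoiPow 2) := by
    rw [Measure.volumeIoiPow, integrable_withDensity_iff (by fun_prop)
      (Filter.Eventually.of_forall fun r => ENNReal.ofReal_lt_top)]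
    have heq : (fun r : Ioi (0:ℝ) => f r.1 * (ENNReal.ofReal (r.1 ^ 2)).toReal)
        = (fun r : ℝ => f r * r ^ 2) ∘ (Subtype.val) := by
      funext r
      simp [ENNReal.toReal_ofReal (sq_nonneg r.1)]
    rw [heq, ← (MeasurableEmbedding.subtype_coe measurableSet_Ioi).integrable_map_iff,
      map_comap_subtype_coe measurableSet_Ioi]
    exact hi
  have hdim : Module.finrank ℝ (EuclideanSpace ℝ (Fin 3)) - 1 = 2 := by
    simp [finrank_euclideanSpace]
  have h3 : Integrable (fun p : sphere (0:EuclideanSpace ℝ (Fin 3)) 1 × Ioi (0:ℝ) => f p.2.1)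
      ((volume : Measure (EuclideanSpace ℝ (Fin 3))).toSphere.prod
        (Measure.volumeIoiPow (Module.finrank ℝ (EuclideanSpace ℝ (Fin 3)) - 1))) := by
    rw [hdim]
    have := (integrable_const (μ := (volume : Measure (EuclideanSpace ℝ (Fin 3))).toSphere) (1:ℝ)).mul_prod h2
    simpa using this
  have hmp := ((Measure.measurePreserving_homeomorphUnitSphereProd
      (volume : Measure (EuclideanSpace ℝ (Fin 3)))).integrable_comp_emb
      (Homeomorph.measurableEmbedding _)
      (g := fun p : sphere (0:EuclideanSpace ℝ (Fin 3)) 1 × Ioi (0:ℝ) => f p.2.1)).2 h3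
  have hcomp : ((fun p : sphere (0:EuclideanSpace ℝ (Fin 3)) 1 × Ioi (0:ℝ) => f p.2.1) ∘
      (homeomorphUnitSphereProd (EuclideanSpace ℝ (Fin 3))))
      = fun x : ({(0:EuclideanSpace ℝ (Fin 3))}ᶜ : Set (EuclideanSpace ℝ (Fin 3))) => f ‖x.1‖ := by
    funext x; simp
  rw [hcomp] at hmp
  have : IntegrableOn (fun x : EuclideanSpace ℝ (Fin 3) => f ‖x‖)
      ({(0:EuclideanSpace ℝ (Fin 3))}ᶜ) volume := by
    rw [IntegrableOn, ← map_comap_subtype_coe hs,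
      (MeasurableEmbedding.subtype_coe hs).integrable_map_iff]
    exact hmp
  rwa [IntegrableOn, MeasureTheory.restrict_compl_singleton] at this


lemma ball_vol_3 : (volume (ball (0: EuclideanSpace ℝ (Fin 3)) 1)).toReal = 4 * π / 3 := by
  rw [EuclideanSpace.volume_ball]
  have h32 : ((Fintype.card (Fin 3) : ℝ) / 2 + 1) = (3:ℝ)/2 + 1 := by norm_num
  have hg : Real.Gamma ((3:ℝ)/2 + 1) = 3 / 4 * Real.sqrt π := by
    rw [Real.Gamma_add_one (by norm_num)]
    have : (3:ℝ)/2 = 1/2 + 1 := by norm_num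
    rw [this, Real.Gamma_add_one (by norm_num), Real.Gamma_one_half_eq]
    ring
  have hsq : Real.sqrt π ^ 3 = π * Real.sqrt π := by
    have : Real.sqrt π ^ 3 = Real.sqrt π ^ 2 * Real.sqrt π := by ring
    rw [this, Real.sq_sqrt Real.pi_nonneg]
  have hsπ : Real.sqrt π ≠ 0 := ne_of_gt (Real.sqrt_pos.mpr Real.pi_pos)
  rw [ENNReal.toReal_mul, ENNReal.toReal_pow, ENNReal.toReal_ofReal (by norm_num),
    ENNReal.toReal_ofReal (by positivity)]
  simp only [Fintype.card_fin, one_pow, one_mul]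
  norm_num only
  rw [show (5:ℝ)/2 = 3/2 + 1 by norm_num, hg, hsq]
  field_simp



lemma radial_exp_integrableOn (b c : ℝ) (hb : 0 < b) (hc : 0 < c) :
    IntegrableOn (fun r : ℝ => Real.exp (-b * r) / (c * r) * r ^ 2) (Ioi (0:ℝ)) := by
  have h0 : IntegrableOn (fun x : ℝ => Real.exp (-x) * x ^ ((2:ℝ) - 1)) (Ioi (0:ℝ)) :=
    Real.GammaIntegral_convergent (by norm_num)
  have h1 : IntegrableOn (fun r : ℝ => Real.exp (-(b*r)) * (b*r) ^ ((2:ℝ)-1)) (Ioi (0:ℝ)) := by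
    rw [integrableOn_Ioi_comp_mul_left_iff
      (fun x : ℝ => Real.exp (-x) * x ^ ((2:ℝ)-1)) 0 hb, mul_zero]
    exact h0
  have h2 : IntegrableOn (fun r : ℝ => 1/(c*b) * (Real.exp (-(b*r)) * (b*r) ^ ((2:ℝ)-1)))
      (Ioi (0:ℝ)) := h1.const_mul _
  refine IntegrableOn.congr_fun h2 ?_ measurableSet_Ioi
  intro r hr
  have hr0 : (0:ℝ) < r := hr
  simp only [show ((2:ℝ)-1) = 1 by norm_num, Real.rpow_one, neg_mul]
  field_simp

lemma radial_g_integrable (b c : ℝ) (hb : 0 < b) (hc : 0 < c) :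
    Integrable (fun x : EuclideanSpace ℝ (Fin 3) => Real.exp (-b * ‖x‖) / (c * ‖x‖)) := by
  refine radial_integrable _ ?_ (radial_exp_integrableOn b c hb hc)
  fun_prop

lemma radial_g_integral (b c : ℝ) (hb : 0 < b) (hc : 0 < c) :
    ∫ x : EuclideanSpace ℝ (Fin 3), Real.exp (-b * ‖x‖) / (c * ‖x‖) = 4 * π / (c * b ^ 2) := by
  rw [integral_fun_norm_addHaar (volume : Measure (EuclideanSpace ℝ (Fin 3)))
    (fun r => Real.exp (-b * r) / (c * r))]
  have hdim : Module.finrank ℝ (EuclideanSpace ℝ (Fin 3)) = 3 := by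
    simp [finrank_euclideanSpace]
  rw [hdim, measureReal_def, ball_vol_3]
  have hcong : ∀ r ∈ Ioi (0:ℝ), r ^ (3-1) • (Real.exp (-b * r) / (c * r))
      = (1/c) * (r ^ ((2:ℝ)-1) * Real.exp (-(b * r))) := by
    intro r hr
    have hr0 : (0:ℝ) < r := hr
    rw [show ((2:ℝ)-1) = 1 by norm_num, Real.rpow_one, smul_eq_mul, neg_mul]
    field_simp
  rw [setIntegral_congr_fun measurableSet_Ioi hcong, integral_const_mul,
    integral_rpow_mul_exp_neg_mul_Ioi (by norm_num) hb, Real.Gamma_two,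
    show ((2:ℝ)) = ((2:ℕ):ℝ) by norm_num, Real.rpow_natCast]
  simp only [nsmul_eq_mul, smul_eq_mul]
  field_simp
  ring

lemma trans_g_integrable (b c : ℝ) (hb : 0 < b) (hc : 0 < c) (x : EuclideanSpace ℝ (Fin 3)) :
    Integrable (fun y : EuclideanSpace ℝ (Fin 3) => Real.exp (-b * ‖x - y‖) / (c * ‖x - y‖)) :=
  (radial_g_integrable b c hb hc).comp_sub_left x

lemma trans_g_integral (b c : ℝ) (hb : 0 < b) (hc : 0 < c) (x : EuclideanSpace ℝ (Fin 3)) :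
    ∫ y : EuclideanSpace ℝ (Fin 3), Real.exp (-b * ‖x - y‖) / (c * ‖x - y‖)
      = 4 * π / (c * b ^ 2) := by
  rw [integral_sub_left_eq_self
    (fun z : EuclideanSpace ℝ (Fin 3) => Real.exp (-b * ‖z‖) / (c * ‖z‖)) volume x]
  exact radial_g_integral b c hb hc

set_option maxHeartbeats 2000000 in
/-- Theorem 1.2 (integral-equation form). Here `q` is bounded and uniformly
continuous with `q ≥ a²`, `p = q - a²`, and `Pn` is the sup-norm `‖p‖∞` of `p`
(`p ≥ 0`, so `Pn` is the least upper bound of the range of `p`, which also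
encodes boundedness of `q`). Under the smallness conditions, the solutions `u ε`
of the integral equation converge in sup-norm, as `ε → 0⁺`, to the solution `u`
of the limiting equation `q(x)u = f(u)`. -/
theorem solutions_converge_to_limiting_solution (a R γ : ℝ) (ha : 0 < a) (hR : 0 < R)
    (hγ0 : 0 < γ) (hγ1 : γ < 1)
    (q : EuclideanSpace ℝ (Fin 3) → ℝ)
    (hqunif : UniformContinuous q) (hq : ∀ x, a ^ 2 ≤ q x)
    (Pn : ℝ) (hPn : IsLUB (Set.range fun x => q x - a ^ 2) Pn)
    (f : ℝ → ℝ) (hf : ContDiff ℝ 1 f)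
    (M : ℝ) (hM : M = sSup ((fun t => |f t|) '' Set.Icc (-R) R))
    (M₁ : ℝ) (hM₁ : M₁ = sSup ((fun t => |deriv f t|) '' Set.Icc (-(2 * R)) (2 * R)))
    (hcond1 : (Pn * R + M) / a ^ 2 ≤ R)
    (hcond2 : (Pn + M₁) / a ^ 2 ≤ γ)
    (u : ℝ → BoundedContinuousFunction (EuclideanSpace ℝ (Fin 3)) ℝ)
    (huR : ∀ ε : ℝ, 0 < ε → ‖u ε‖ ≤ R)
    (hueq : ∀ ε : ℝ, 0 < ε → ∀ x : EuclideanSpace ℝ (Fin 3),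
      u ε x = ∫ y : EuclideanSpace ℝ (Fin 3),
        Real.exp (-(a / ε) * ‖x - y‖) / (4 * Real.pi * ε ^ 2 * ‖x - y‖) *
          (-(q y - a ^ 2) * u ε y + f (u ε y)))
    (u₀ : BoundedContinuousFunction (EuclideanSpace ℝ (Fin 3)) ℝ)
    (hu₀R : ‖u₀‖ ≤ R)
    (hu₀eq : ∀ x : EuclideanSpace ℝ (Fin 3), q x * u₀ x = f (u₀ x)) :
    Filter.Tendsto (fun ε : ℝ => ‖u ε - u₀‖) (nhdsWithin 0 (Set.Ioi 0)) (nhds 0) := by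
  have ha2 : (0:ℝ) < a ^ 2 := by positivity
  have hγ' : (0:ℝ) < 1 - γ := by linarith
  have hp0 : ∀ y, 0 ≤ q y - a ^ 2 := fun y => sub_nonneg.mpr (hq y)
  have hpP : ∀ y, q y - a ^ 2 ≤ Pn := fun y => hPn.1 ⟨y, rfl⟩
  have hPn0 : 0 ≤ Pn := le_trans (hp0 0) (hpP 0)
  have hfc : Continuous f := hf.continuous
  have hderiv : Continuous (deriv f) := hf.continuous_deriv le_rfl
  have hM₁b : ∀ t ∈ Icc (-(2*R)) (2*R), |deriv f t| ≤ M₁ := by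
    intro t ht
    rw [hM₁]
    exact le_csSup ((isCompact_Icc.image hderiv.abs).bddAbove) ⟨t, ht, rfl⟩
  have hM₁0 : 0 ≤ M₁ := le_trans (abs_nonneg _) (hM₁b 0 ⟨by linarith, by linarith⟩)
  have hPM : Pn + M₁ ≤ γ * a ^ 2 := by
    rw [div_le_iff₀ ha2] at hcond2; linarith
  have hLip : ∀ s t : ℝ, |s| ≤ R → |t| ≤ R → |f s - f t| ≤ M₁ * |s - t| := by
    intro s t hs ht
    have hmem : ∀ z : ℝ, |z| ≤ R → z ∈ Icc (-(2*R)) (2*R) := by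
      intro z hz
      have := abs_le.mp hz
      exact ⟨by linarith [this.1], by linarith [this.2]⟩
    have := (convex_Icc (-(2*R)) (2*R)).norm_image_sub_le_of_norm_deriv_le
      (fun z _ => (hf.differentiable one_ne_zero).differentiableAt)
      (fun z hz => by simpa [Real.norm_eq_abs] using hM₁b z hz)
      (hmem t ht) (hmem s hs)
    simpa [Real.norm_eq_abs] using this
  have hval : ∀ (v : BoundedContinuousFunction (EuclideanSpace ℝ (Fin 3)) ℝ), ‖v‖ ≤ R →
      ∀ y, |v y| ≤ R := fun v hv y =>
    le_trans (by simpa [Real.norm_eq_abs] using v.norm_coe_le_norm y) hv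
  have ha2u₀ : ∀ y, -(q y - a ^ 2) * u₀ y + f (u₀ y) = a ^ 2 * u₀ y := by
    intro y; rw [← hu₀eq y]; ring
  -- uniform continuity of u₀
  have hu₀unif : ∀ η : ℝ, 0 < η →
      ∃ δ : ℝ, 0 < δ ∧ ∀ x y, dist x y ≤ δ → |u₀ x - u₀ y| ≤ η := by
    intro η hη
    obtain ⟨δ, hδ0, hδ⟩ := Metric.uniformContinuous_iff.mp hqunif ((1-γ)*a^2*η/R)
      (by positivity)
    refine ⟨δ/2, by positivity, fun x y hxy => ?_⟩
    have hq' : |q x - q y| ≤ (1-γ)*a^2*η/R := by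
      have := hδ (show dist x y < δ by linarith)
      rw [Real.dist_eq] at this
      linarith
    have h1 : a^2*(u₀ x - u₀ y) = (-(q x - a^2))*(u₀ x - u₀ y)
        + (-(q x - q y))*(u₀ y) + (f (u₀ x) - f (u₀ y)) := by
      rw [← hu₀eq x, ← hu₀eq y]; ring
    have habs : a^2*|u₀ x - u₀ y| ≤ (Pn + M₁)*|u₀ x - u₀ y| + R*((1-γ)*a^2*η/R) := by
      have e1 : a^2*|u₀ x - u₀ y| = |a^2*(u₀ x - u₀ y)| := by
        rw [abs_mul, abs_of_pos ha2]
      rw [e1, h1]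
      have t1 : |(-(q x - a^2))*(u₀ x - u₀ y) + (-(q x - q y))*(u₀ y) + (f (u₀ x) - f (u₀ y))|
          ≤ |(-(q x - a^2))*(u₀ x - u₀ y)| + |(-(q x - q y))*(u₀ y)|
            + |f (u₀ x) - f (u₀ y)| :=
        (abs_add_le _ _).trans (by gcongr; exact abs_add_le _ _)
      have t2 : |(-(q x - a^2))*(u₀ x - u₀ y)| ≤ Pn * |u₀ x - u₀ y| := by
        rw [abs_mul, abs_neg, abs_of_nonneg (hp0 x)]
        exact mul_le_mul_of_nonneg_right (hpP x) (abs_nonneg _)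
      have t3 : |(-(q x - q y))*(u₀ y)| ≤ ((1-γ)*a^2*η/R) * R := by
        rw [abs_mul, abs_neg]
        exact mul_le_mul hq' (hval u₀ hu₀R y) (abs_nonneg _) (by positivity)
      have t4 : |f (u₀ x) - f (u₀ y)| ≤ M₁ * |u₀ x - u₀ y| :=
        hLip _ _ (hval u₀ hu₀R x) (hval u₀ hu₀R y)
      nlinarith [t1, t2, t3, t4]
    have hRη : R*((1-γ)*a^2*η/R) = (1-γ)*a^2*η := by field_simp
    nlinarith [habs, hRη, mul_le_mul_of_nonneg_right hPM (abs_nonneg (u₀ x - u₀ y)), mul_pos hγ' ha2]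
  -- main estimate
  have main : ∀ ε : ℝ, 0 < ε → ∀ δ : ℝ, 0 < δ → ∀ ω : ℝ, 0 ≤ ω →
      (∀ x y, dist x y ≤ δ → |u₀ x - u₀ y| ≤ ω) →
      ‖u ε - u₀‖ ≤ γ * ‖u ε - u₀‖ + ω + 8*R*Real.exp (-(a*δ)/(2*ε)) := by
    intro ε hε δ hδ ω hω hmod
    have hD0 : 0 ≤ ‖u ε - u₀‖ := norm_nonneg _
    have he0 : (0:ℝ) < Real.exp (-(a*δ)/(2*ε)) := Real.exp_pos _
    refine (BoundedContinuousFunction.norm_le (by positivity)).mpr ?_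
    intro x
    set D := ‖u ε - u₀‖ with hDdef
    set e₀ := Real.exp (-(a*δ)/(2*ε)) with he₀def
    set g : EuclideanSpace ℝ (Fin 3) → ℝ := fun y =>
      Real.exp (-(a / ε) * ‖x - y‖) / (4 * Real.pi * ε ^ 2 * ‖x - y‖) with hgdef
    set g2 : EuclideanSpace ℝ (Fin 3) → ℝ := fun y =>
      Real.exp (-(a / (2*ε)) * ‖x - y‖) / (4 * Real.pi * ε ^ 2 * ‖x - y‖) with hg2def
    set F : EuclideanSpace ℝ (Fin 3) → ℝ := fun y =>
      -(q y - a ^ 2) * u ε y + f (u ε y) with hFdef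
    have hgnn : ∀ y, 0 ≤ g y := by
      intro y
      exact div_nonneg (Real.exp_pos _).le (by positivity)
    have hg2nn : ∀ y, 0 ≤ g2 y := by
      intro y
      exact div_nonneg (Real.exp_pos _).le (by positivity)
    have hgint : Integrable g :=
      trans_g_integrable (a/ε) (4*Real.pi*ε^2) (by positivity) (by positivity) x
    have hg2int : Integrable g2 :=
      trans_g_integrable (a/(2*ε)) (4*Real.pi*ε^2) (by positivity) (by positivity) x
    have hgval : ∫ y, g y = 1 / a^2 := by
      rw [hgdef]
      rw [trans_g_integral (a/ε) (4*Real.pi*ε^2) (by positivity) (by positivity) x]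
      rw [div_pow, div_eq_div_iff (by positivity) (by positivity)]
      field_simp
    have hg2val : ∫ y, g2 y = 4 / a^2 := by
      rw [hg2def]
      rw [trans_g_integral (a/(2*ε)) (4*Real.pi*ε^2) (by positivity) (by positivity) x]
      rw [div_pow, div_eq_div_iff (by positivity) (by positivity)]
      field_simp
      ring
    have hFcont : Continuous F := by
      rw [hFdef]
      exact (((hqunif.continuous.sub continuous_const).neg.mul (u ε).continuous)).add
        (hfc.comp (u ε).continuous)
    obtain ⟨Cf, hCf⟩ : ∃ Cf : ℝ, ∀ t ∈ Icc (-R) R, |f t| ≤ Cf := by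
      obtain ⟨Cf, hCf⟩ := (isCompact_Icc.image hfc.abs).bddAbove
      exact ⟨Cf, fun t ht => hCf ⟨t, ht, rfl⟩⟩
    have hFb : ∀ y, |F y| ≤ Pn * R + Cf := by
      intro y
      have h1 : |(-(q y - a^2)) * u ε y| ≤ Pn * R := by
        rw [abs_mul, abs_neg, abs_of_nonneg (hp0 y)]
        exact mul_le_mul (hpP y) (hval _ (huR ε hε) y) (abs_nonneg _) hPn0
      have h2 : |f (u ε y)| ≤ Cf := hCf _ (abs_le.mp (hval _ (huR ε hε) y))
      calc |F y| ≤ |(-(q y - a^2)) * u ε y| + |f (u ε y)| := by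
            rw [hFdef]; exact abs_add_le _ _
        _ ≤ Pn * R + Cf := add_le_add h1 h2
    have hA : Integrable (fun y => g y * F y) := by
      have := Integrable.bdd_mul hgint hFcont.aestronglyMeasurable
        (Filter.Eventually.of_forall fun y => by simpa [Real.norm_eq_abs] using hFb y)
      exact this.congr (Filter.Eventually.of_forall fun y => mul_comm _ _)
    have hux : u ε x = ∫ y, g y * F y := hueq ε hε x
    have h3 : ∫ y, g y * (a^2 * u₀ x) = u₀ x := by
      rw [integral_mul_const, hgval]
      field_simp
    have hsub : u ε x - u₀ x = ∫ y, (g y * F y - g y * (a^2 * u₀ x)) := by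
      rw [integral_sub hA (hgint.mul_const _), ← hux, h3]
    -- pointwise bound
    have hbound : ∀ y, |g y * F y - g y * (a^2 * u₀ x)|
        ≤ (γ*a^2*D + a^2*ω) * g y + (2*R*a^2*e₀) * g2 y := by
      intro y
      have hd : |u ε y - u₀ y| ≤ D := by
        have := BoundedContinuousFunction.norm_coe_le_norm (u ε - u₀) y
        simpa [Real.norm_eq_abs] using this
      have h1 : |F y - a^2 * u₀ y| ≤ γ*a^2*D := by
        have hid : F y - a^2*u₀ y = -(q y - a^2)*(u ε y - u₀ y)
            + (f (u ε y) - f (u₀ y)) := by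
          rw [hFdef, ← ha2u₀ y]; ring
        have t2 : |(-(q y - a^2))*(u ε y - u₀ y)| ≤ Pn * D := by
          rw [abs_mul, abs_neg, abs_of_nonneg (hp0 y)]
          exact mul_le_mul (hpP y) hd (abs_nonneg _) hPn0
        have t4 : |f (u ε y) - f (u₀ y)| ≤ M₁ * |u ε y - u₀ y| :=
          hLip _ _ (hval _ (huR ε hε) y) (hval u₀ hu₀R y)
        have t5 : |F y - a^2*u₀ y| ≤ |(-(q y - a^2))*(u ε y - u₀ y)|
            + |f (u ε y) - f (u₀ y)| := by
          rw [hid]; exact abs_add_le _ _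
        nlinarith [abs_nonneg (u ε y - u₀ y), hPM, hd]
      have h2 : g y * |u₀ y - u₀ x| ≤ ω * g y + (2*R*e₀) * g2 y := by
        rcases le_or_gt (dist x y) δ with hcase | hcase
        · have hm := hmod y x (by rwa [dist_comm])
          have := mul_le_mul_of_nonneg_left hm (hgnn y)
          nlinarith [mul_nonneg (mul_nonneg (by linarith : (0:ℝ) ≤ 2*R) he0.le) (hg2nn y)]
        · have hr : δ < ‖x - y‖ := by rwa [dist_eq_norm] at hcase
          have hr0 : (0:ℝ) < ‖x - y‖ := lt_trans hδ hr
          have hΔ : |u₀ y - u₀ x| ≤ 2*R := by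
            calc |u₀ y - u₀ x| ≤ |u₀ y| + |u₀ x| := abs_sub _ _
              _ ≤ R + R := add_le_add (hval u₀ hu₀R y) (hval u₀ hu₀R x)
              _ = 2*R := by ring
          have hgle : g y ≤ e₀ * g2 y := by
            rw [hgdef, hg2def, he₀def]
            simp only
            rw [mul_div_assoc', ← Real.exp_add]
            have hden : (0:ℝ) < 4 * Real.pi * ε ^ 2 * ‖x - y‖ := by positivity
            rw [div_le_div_iff₀ hden hden]
            apply mul_le_mul_of_nonneg_right _ hden.le
            apply Real.exp_le_exp.mpr
            have e3 : (0:ℝ) ≤ a/(2*ε) := by positivity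
            have e4 : (a/(2*ε))*δ ≤ (a/(2*ε))*‖x - y‖ :=
              mul_le_mul_of_nonneg_left hr.le e3
            have e7 : -(a/ε) * ‖x - y‖ - (-(a*δ)/(2*ε) + -(a/(2*ε)) * ‖x - y‖)
                = (a/(2*ε)) * δ - (a/(2*ε)) * ‖x - y‖ := by
              field_simp
              ring
            linarith [e4, e7]
          calc g y * |u₀ y - u₀ x| ≤ g y * (2*R) :=
                mul_le_mul_of_nonneg_left hΔ (hgnn y)
            _ ≤ (e₀ * g2 y) * (2*R) :=
                mul_le_mul_of_nonneg_right hgle (by linarith)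
            _ = (2*R*e₀) * g2 y := by ring
            _ ≤ ω * g y + (2*R*e₀) * g2 y := by
                nlinarith [mul_nonneg hω (hgnn y)]
      have htri : |F y - a^2 * u₀ x| ≤ γ*a^2*D + a^2*|u₀ y - u₀ x| := by
        have := abs_sub_le (F y) (a^2 * u₀ y) (a^2 * u₀ x)
        have e5 : |a^2 * u₀ y - a^2 * u₀ x| = a^2 * |u₀ y - u₀ x| := by
          rw [← mul_sub, abs_mul, abs_of_pos ha2]
        linarith [h1]
      calc |g y * F y - g y * (a^2 * u₀ x)| = g y * |F y - a^2 * u₀ x| := by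
            rw [← mul_sub, abs_mul, abs_of_nonneg (hgnn y)]
        _ ≤ g y * (γ*a^2*D + a^2*|u₀ y - u₀ x|) :=
            mul_le_mul_of_nonneg_left htri (hgnn y)
        _ = γ*a^2*D * g y + a^2 * (g y * |u₀ y - u₀ x|) := by ring
        _ ≤ γ*a^2*D * g y + a^2 * (ω * g y + (2*R*e₀) * g2 y) := by
            nlinarith [mul_le_mul_of_nonneg_left h2 ha2.le]
        _ = (γ*a^2*D + a^2*ω) * g y + (2*R*a^2*e₀) * g2 y := by ring
    have hBint1 : Integrable (fun y => (γ*a^2*D + a^2*ω) * g y) := hgint.const_mul _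
    have hBint2 : Integrable (fun y => (2*R*a^2*e₀) * g2 y) := hg2int.const_mul _
    have habs : |u ε x - u₀ x| ≤ γ*D + ω + 8*R*e₀ := by
      have step1 : |u ε x - u₀ x|
          ≤ ∫ y, ((γ*a^2*D + a^2*ω) * g y + (2*R*a^2*e₀) * g2 y) := by
        rw [hsub]
        calc |∫ y, (g y * F y - g y * (a^2 * u₀ x))|
            ≤ ∫ y, |g y * F y - g y * (a^2 * u₀ x)| := by
              simpa [Real.norm_eq_abs] using
                norm_integral_le_integral_norm (fun y => g y * F y - g y * (a^2 * u₀ x))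
          _ ≤ ∫ y, ((γ*a^2*D + a^2*ω) * g y + (2*R*a^2*e₀) * g2 y) := by
              refine integral_mono (hA.sub (hgint.mul_const _)).abs (hBint1.add hBint2) ?_
              intro y
              exact hbound y
      have step2 : ∫ y, ((γ*a^2*D + a^2*ω) * g y + (2*R*a^2*e₀) * g2 y)
          = γ*D + ω + 8*R*e₀ := by
        rw [integral_add hBint1 hBint2, integral_const_mul, integral_const_mul, hgval, hg2val]
        field_simp
        ring
      linarith [step1, step2.le, step2.ge]
    calc ‖(u ε - u₀) x‖ = |u ε x - u₀ x| := by
          simp [Real.norm_eq_abs]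
      _ ≤ γ*D + ω + 8*R*e₀ := habs
      _ = γ * D + ω + 8*R*e₀ := by ring
  -- conclusion
  rw [Metric.tendsto_nhdsWithin_nhds]
  intro η hη
  obtain ⟨δ, hδ0, hmod⟩ := hu₀unif ((1-γ)*η/4) (by positivity)
  have htend : Filter.Tendsto (fun ε : ℝ => 8*R*Real.exp (-(a*δ)/(2*ε)))
      (nhdsWithin 0 (Set.Ioi 0)) (nhds 0) := by
    have h1 : Filter.Tendsto (fun ε : ℝ => (a*δ/2) * ε⁻¹)
        (nhdsWithin 0 (Set.Ioi 0)) Filter.atTop :=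
      (tendsto_inv_nhdsGT_zero).const_mul_atTop (by positivity)
    have h2 : Filter.Tendsto (fun ε : ℝ => Real.exp (-(a*δ)/(2*ε)))
        (nhdsWithin 0 (Set.Ioi 0)) (nhds 0) := by
      have := Real.tendsto_exp_neg_atTop_nhds_zero.comp h1
      refine this.congr fun ε => ?_
      simp only [Function.comp_apply]
      congr 1
      ring
    simpa using h2.const_mul (8*R)
  rw [Metric.tendsto_nhdsWithin_nhds] at htend
  obtain ⟨d, hd0, hd⟩ := htend ((1-γ)*η/4) (by positivity)
  refine ⟨d, hd0, ?_⟩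
  intro ε hε hεd
  have h8 : 8*R*Real.exp (-(a*δ)/(2*ε)) < (1-γ)*η/4 := by
    have := hd hε hεd
    rwa [Real.dist_eq, sub_zero, abs_of_nonneg (by positivity)] at this
  have hmain := main ε hε δ hδ0 ((1-γ)*η/4) (by positivity) hmod
  rw [Real.dist_eq, sub_zero, abs_of_nonneg (norm_nonneg _)]
  nlinarith [norm_nonneg (u ε - u₀)]
end

section
/- (Solvability of the limiting equation (1.3).) Let a > 0, let q : ℝ³ → ℝ be continuous with q(x) ≥ a² for all x, put p = q − a², and assume p is bounded. Let f : ℝ → ℝ be continuously differentiable. Fix R > 0, set M(R) = sup_{|t|≤R} |f(t)| and M₁(R) = sup_{|t|≤2R} |f'(t)|, and assume (‖p‖∞ · R + M(R))/a² ≤ R and (‖p‖∞ + M₁(R))/a² ≤ γ for some γ with 0 < γ < 1. Then there exists a unique continuous function u : ℝ³ → ℝ with |u(x)| ≤ R for all x satisfying q(x) u(x) = f(u(x)) for all x ∈ ℝ³. -/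
/-- Solvability of the limiting equation (1.3). Here the potential is
`q = p + a²` with `p` bounded, continuous and nonnegative (equivalently, `q` is
continuous with `q ≥ a²` and `p = q - a²` bounded). Under the smallness
conditions there is a unique continuous `u` with `|u(x)| ≤ R` solving
`q(x)u(x) = f(u(x))` for all `x`. -/
theorem limiting_equation_solvable (a R γ : ℝ) (ha : 0 < a) (hR : 0 < R)
    (hγ0 : 0 < γ) (hγ1 : γ < 1)
    (p : BoundedContinuousFunction (EuclideanSpace ℝ (Fin 3)) ℝ) (hp : ∀ x, 0 ≤ p x)
    (q : EuclideanSpace ℝ (Fin 3) → ℝ) (hq : ∀ x, q x = p x + a ^ 2)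
    (f : ℝ → ℝ) (hf : ContDiff ℝ 1 f)
    (M : ℝ) (hM : M = sSup ((fun t => |f t|) '' Set.Icc (-R) R))
    (M₁ : ℝ) (hM₁ : M₁ = sSup ((fun t => |deriv f t|) '' Set.Icc (-(2 * R)) (2 * R)))
    (hcond1 : (‖p‖ * R + M) / a ^ 2 ≤ R)
    (hcond2 : (‖p‖ + M₁) / a ^ 2 ≤ γ) :
    ∃! u : EuclideanSpace ℝ (Fin 3) → ℝ,
      Continuous u ∧ (∀ x, |u x| ≤ R) ∧ ∀ x, q x * u x = f (u x) := by
  have ha2 : (0 : ℝ) < a ^ 2 := by positivity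
  -- bounds from the sSup definitions
  have hMb : ∀ t ∈ Set.Icc (-R) R, |f t| ≤ M := by
    intro t ht
    rw [hM]
    exact le_csSup ((isCompact_Icc.image (hf.continuous.abs)).bddAbove)
      (Set.mem_image_of_mem _ ht)
  have hderiv_cont : Continuous (deriv f) := hf.continuous_deriv le_rfl
  have hM₁b : ∀ t ∈ Set.Icc (-(2 * R)) (2 * R), |deriv f t| ≤ M₁ := by
    intro t ht
    rw [hM₁]
    exact le_csSup ((isCompact_Icc.image hderiv_cont.abs).bddAbove)
      (Set.mem_image_of_mem _ ht)
  -- Lipschitz bound for f on [-R, R]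
  have hlip : ∀ s ∈ Set.Icc (-R) R, ∀ t ∈ Set.Icc (-R) R, |f s - f t| ≤ M₁ * |s - t| := by
    intro s hs t ht
    have hsub : Set.Icc (-R) R ⊆ Set.Icc (-(2 * R)) (2 * R) :=
      Set.Icc_subset_Icc (by linarith) (by linarith)
    have := (convex_Icc (-(2 * R)) (2 * R)).norm_image_sub_le_of_norm_deriv_le
      (fun x _ => (hf.differentiable one_ne_zero).differentiableAt)
      (fun x hx => hM₁b x hx) (hsub ht) (hsub hs)
    simpa [Real.norm_eq_abs] using this
  have hpbd : ∀ x, |p x| ≤ ‖p‖ := fun x => p.norm_coe_le_norm x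
  have hpnn : (0 : ℝ) ≤ ‖p‖ := norm_nonneg p
  -- the contraction map for each x
  set S : Set ℝ := Set.Icc (-R) R with hS
  have hSne : S.Nonempty := Set.nonempty_Icc.2 (by linarith)
  haveI : Nonempty S := hSne.to_subtype
  haveI : CompleteSpace S := isClosed_Icc.completeSpace_coe
  have hmaps : ∀ x : EuclideanSpace ℝ (Fin 3), ∀ t ∈ S, (f t - p x * t) / a ^ 2 ∈ S := by
    intro x t ht
    have h1 : |f t - p x * t| ≤ ‖p‖ * R + M := by
      have h2 : |p x * t| ≤ ‖p‖ * R := by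
        rw [abs_mul]
        exact mul_le_mul (hpbd x) (abs_le.2 ht) (abs_nonneg t) hpnn
      calc |f t - p x * t| ≤ |f t| + |p x * t| := abs_sub _ _
        _ ≤ ‖p‖ * R + M := by linarith [hMb t ht]
    have : |(f t - p x * t) / a ^ 2| ≤ R := by
      rw [abs_div, abs_of_pos ha2]
      exact (div_le_iff₀ ha2).2 (le_trans h1 (by
        have := (div_le_iff₀ ha2).1 hcond1; linarith))
    exact abs_le.1 this
  set F : EuclideanSpace ℝ (Fin 3) → S → S :=
    fun x t => ⟨(f t.1 - p x * t.1) / a ^ 2, hmaps x t.1 t.2⟩ with hF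
  set K : NNReal := ⟨γ, hγ0.le⟩ with hK
  have hcontr : ∀ x, ContractingWith K (F x) := by
    intro x
    constructor
    · exact_mod_cast hγ1
    · apply LipschitzWith.of_dist_le_mul
      rintro ⟨s, hs⟩ ⟨t, ht⟩
      have hd : dist (F x ⟨s, hs⟩) (F x ⟨t, ht⟩) =
          |(f s - p x * s) / a ^ 2 - (f t - p x * t) / a ^ 2| := rfl
      rw [hd]
      have hdist : dist (⟨s, hs⟩ : S) (⟨t, ht⟩ : S) = |s - t| := rfl
      rw [hdist]
      have h1 : (f s - p x * s) / a ^ 2 - (f t - p x * t) / a ^ 2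
          = ((f s - f t) - p x * (s - t)) / a ^ 2 := by ring
      rw [h1, abs_div, abs_of_pos ha2, div_le_iff₀ ha2]
      have h2 : |(f s - f t) - p x * (s - t)| ≤ (M₁ + ‖p‖) * |s - t| := by
        calc |(f s - f t) - p x * (s - t)| ≤ |f s - f t| + |p x * (s - t)| := abs_sub _ _
          _ ≤ M₁ * |s - t| + ‖p‖ * |s - t| := by
              refine add_le_add (hlip s hs t ht) ?_
              rw [abs_mul]
              exact mul_le_mul_of_nonneg_right (hpbd x) (abs_nonneg _)
          _ = (M₁ + ‖p‖) * |s - t| := by ring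
      have h3 : (M₁ + ‖p‖) * |s - t| ≤ γ * |s - t| * a ^ 2 := by
        have hγ' : (M₁ + ‖p‖) ≤ γ * a ^ 2 := by
          have := (div_le_iff₀ ha2).1 hcond2; linarith
        calc (M₁ + ‖p‖) * |s - t| ≤ γ * a ^ 2 * |s - t| :=
              mul_le_mul_of_nonneg_right hγ' (abs_nonneg _)
          _ = γ * |s - t| * a ^ 2 := by ring
      have : (K : ℝ) = γ := rfl
      rw [this]
      linarith
  -- the solution
  set u : EuclideanSpace ℝ (Fin 3) → ℝ :=
    fun x => (ContractingWith.fixedPoint (F x) (hcontr x)).1 with hu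
  have humem : ∀ x, u x ∈ S := fun x => (ContractingWith.fixedPoint (F x) (hcontr x)).2
  have hufix : ∀ x, (f (u x) - p x * u x) / a ^ 2 = u x := by
    intro x
    have := (hcontr x).fixedPoint_isFixedPt
    exact congrArg Subtype.val this
  -- equivalence between the equation and the fixed point property
  have hequiv : ∀ x t, (q x * t = f t ↔ (f t - p x * t) / a ^ 2 = t) := by
    intro x t
    rw [hq x]
    constructor
    · intro h
      field_simp
      linarith
    · intro h
      have : f t - p x * t = t * a ^ 2 := by
        field_simp at h; linarith
      linarith [this]
  -- uniqueness of the fixed point for each x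
  have huniq : ∀ x, ∀ t ∈ S, (f t - p x * t) / a ^ 2 = t → t = u x := by
    intro x t ht hfix
    have : Function.IsFixedPt (F x) ⟨t, ht⟩ := Subtype.ext hfix
    have := (hcontr x).fixedPoint_unique this
    exact congrArg Subtype.val this
  -- continuity of u
  have hcont : Continuous u := by
    have hest : ∀ x y, dist (u x) (u y) ≤ |p x - p y| * R / a ^ 2 / (1 - γ) := by
      intro x y
      have hfx : Function.IsFixedPt (F x) (ContractingWith.fixedPoint (F x) (hcontr x)) :=
        (hcontr x).fixedPoint_isFixedPt
      have hfy : Function.IsFixedPt (F y) (ContractingWith.fixedPoint (F y) (hcontr y)) :=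
        (hcontr y).fixedPoint_isFixedPt
      have := (hcontr x).dist_fixedPoint_fixedPoint_of_dist_le' (F y) hfx hfy
        (C := |p x - p y| * R / a ^ 2) (fun z => by
          have hd : dist (F x z) (F y z) =
              |(f z.1 - p x * z.1) / a ^ 2 - (f z.1 - p y * z.1) / a ^ 2| := rfl
          rw [hd]
          have h1 : (f z.1 - p x * z.1) / a ^ 2 - (f z.1 - p y * z.1) / a ^ 2
              = (p y - p x) * z.1 / a ^ 2 := by ring
          rw [h1, abs_div, abs_of_pos ha2, abs_mul, abs_sub_comm]
          gcongr
          exact (abs_le.2 z.2))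
      have hKγ : ((K : ℝ)) = γ := rfl
      calc dist (u x) (u y)
          = dist (ContractingWith.fixedPoint (F x) (hcontr x))
              (ContractingWith.fixedPoint (F y) (hcontr y)) := rfl
        _ ≤ |p x - p y| * R / a ^ 2 / (1 - K) := this
        _ = |p x - p y| * R / a ^ 2 / (1 - γ) := by rw [hKγ]
    rw [Metric.continuous_iff]
    intro x ε hε
    have h1γ : (0 : ℝ) < 1 - γ := by linarith
    have hc : (0 : ℝ) < a ^ 2 * (1 - γ) / R := div_pos (mul_pos ha2 h1γ) hR
    obtain ⟨δ, hδ0, hδ⟩ := Metric.continuous_iff.1 p.continuous x (ε * (a ^ 2 * (1 - γ) / R))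
      (mul_pos hε hc)
    refine ⟨δ, hδ0, fun y hy => ?_⟩
    have h1 := hδ y hy
    have h2 := hest y x
    rw [Real.dist_eq] at h1
    calc dist (u y) (u x) ≤ |p y - p x| * R / a ^ 2 / (1 - γ) := h2
      _ < (ε * (a ^ 2 * (1 - γ) / R)) * R / a ^ 2 / (1 - γ) := by
          gcongr
      _ = ε := by
          have hne1 : (1 : ℝ) - γ ≠ 0 := ne_of_gt h1γ
          have hne2 : R ≠ 0 := ne_of_gt hR
          have hne3 : a ^ 2 ≠ 0 := ne_of_gt ha2
          field_simp
  -- conclusion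
  refine ⟨u, ⟨hcont, fun x => abs_le.2 (humem x), fun x => (hequiv x (u x)).2 (hufix x)⟩, ?_⟩
  rintro v ⟨-, hvR, hveq⟩
  funext x
  exact huniq x (v x) (abs_le.1 (hvR x)) ((hequiv x (v x)).1 (hveq x))
end
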